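/- Let F : C → D be a Krull–Schmidt functor between Krull–Schmidt categories, and let A and B be objects of C with maximal F-dense decompositions A ≅ A_F ⊕ A_0 and B ≅ B_F ⊕ B_0, with associated inclusion morphisms i_A : A_F → A, i_B : B_F → B and projection morphisms π_A : A → A_F, π_B : B → B_F. Suppose f : A → B and g : B → A are morphisms such that F(f) and F(g) are mutually inverse isomorphisms. Then the composites f' := π_B ∘ f ∘ i_A : A_F → B_F and g' := π_A ∘ g ∘ i_B : B_F → A_F are isomorphisms. -/
import Mathlib


open CategoryTheory CategoryTheory.Limits

universe v₁ v₂ u₁ u₂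

attribute [local instance] CategoryTheory.Limits.hasBinaryBiproducts_of_finite_biproducts

/-- The Jacobson radical of a (possibly noncommutative) ring, as a set:
those `x` such that `1 - y * x` is a unit for every `y`. -/
def jacobsonRadicalSet (R : Type*) [Ring R] : Set R :=
  {x | ∀ y : R, IsUnit (1 - y * x)}

variable {C : Type u₁} [Category.{v₁} C] [Preadditive C] [HasFiniteBiproducts C]
variable {D : Type u₂} [Category.{v₂} D] [Preadditive D] [HasFiniteBiproducts D]

/-- An object is indecomposable if it is nonzero and in any biproduct
decomposition one of the two factors is zero. -/
def IsIndecomposable (X : C) : Prop :=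
  ¬ IsZero X ∧ ∀ Y Z : C, Nonempty (X ≅ Y ⊞ Z) → IsZero Y ∨ IsZero Z

/-- `A'` is a direct summand of `A`. -/
def IsSummand (A A' : C) : Prop :=
  ∃ A'' : C, Nonempty (A ≅ A' ⊞ A'')

/-- A Krull–Schmidt category: every object is isomorphic to a finite biproduct of
indecomposable objects, each having a local endomorphism ring. -/
def IsKrullSchmidtCat (C : Type u₁) [Category.{v₁} C] [Preadditive C]
    [HasFiniteBiproducts C] : Prop :=
  ∀ A : C, ∃ (n : ℕ) (X : Fin n → C),
    (∀ i, IsIndecomposable (X i) ∧ IsLocalRing (End (X i))) ∧ Nonempty (A ≅ ⨁ X)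

/-- A Krull–Schmidt functor: for every indecomposable object `A`, the induced map
`End A → End (F A)` sends the Jacobson radical into the Jacobson radical. -/
def IsKrullSchmidtFunctor (F : C ⥤ D) : Prop :=
  ∀ A : C, IsIndecomposable A →
    ∀ μ : End A, μ ∈ jacobsonRadicalSet (End A) →
      (F.map μ : End (F.obj A)) ∈ jacobsonRadicalSet (End (F.obj A))

/-- An object `A` is `F`-dense if `F` sends every nonzero direct summand of `A`
to a nonzero object. -/
def IsFDense (F : C ⥤ D) (A : C) : Prop :=
  ∀ A' : C, IsSummand A A' → ¬ IsZero A' → ¬ IsZero (F.obj A')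

/-! ### Auxiliary lemmas -/

section Auxiliary

set_option linter.unusedSectionVars false

/-- Splitting off a single index from a finite biproduct. -/
noncomputable def splitIso {ι : Type} [Fintype ι] [DecidableEq ι] (X : ι → C) (i₀ : ι) :
    (⨁ X) ≅ X i₀ ⊞ ⨁ (fun j : {j : ι // j ≠ i₀} => X j.1) where
  hom := biprod.lift (biproduct.π X i₀) (biproduct.lift fun j => biproduct.π X j.1)
  inv := biprod.desc (biproduct.ι X i₀) (biproduct.desc fun j => biproduct.ι X j.1)
  hom_inv_id := by
    rw [biprod.lift_desc, biproduct.lift_desc, ← biproduct.total]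
    rw [← Fintype.sum_subtype_add_sum_subtype (· = i₀)
      (fun i => biproduct.π X i ≫ biproduct.ι X i)]
    congr 1
    · symm
      refine Finset.sum_eq_single_of_mem (⟨i₀, rfl⟩ : {x // x = i₀}) ?_ ?_
      · exact @Finset.mem_univ _ (Subtype.fintype fun x => x = i₀) ⟨i₀, rfl⟩
      · intro b _ hb
        exact absurd (Subsingleton.elim b _) hb
  inv_hom_id := by
    apply biprod.hom_ext'
    · apply biprod.hom_ext
      · simp
      · apply biproduct.hom_ext
        intro j
        simp [biproduct.ι_π_ne _ (Ne.symm j.2)]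
    · apply biprod.hom_ext
      · apply biproduct.hom_ext'
        intro j
        simp [biproduct.ι_π_ne _ j.2]
      · apply biproduct.hom_ext'
        intro j
        apply biproduct.hom_ext
        intro k
        by_cases h : j = k
        · subst h; simp
        · simp [biproduct.ι_π_ne _ h, biproduct.ι_π_ne _ (fun hh => h (Subtype.ext hh))]

theorem isSummand_trans {A B B' : C} (h1 : IsSummand A B) (h2 : IsSummand B B') :
    IsSummand A B' := by
  obtain ⟨CC, ⟨e1⟩⟩ := h1
  obtain ⟨B'', ⟨e2⟩⟩ := h2
  exact ⟨B'' ⊞ CC, ⟨e1 ≪≫ biprod.mapIso e2 (Iso.refl CC) ≪≫ biprod.associator _ _ _⟩⟩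

theorem isSummand_of_iso {A A' B : C} (e : A ≅ A') (h : IsSummand A' B) : IsSummand A B := by
  obtain ⟨CC, ⟨e1⟩⟩ := h
  exact ⟨CC, ⟨e ≪≫ e1⟩⟩

theorem isSummand_left (X Y : C) : IsSummand (X ⊞ Y) X := ⟨Y, ⟨Iso.refl _⟩⟩
theorem isSummand_right (X Y : C) : IsSummand (X ⊞ Y) Y := ⟨X, ⟨biprod.braiding X Y⟩⟩

theorem isZero_biproduct {ι : Type} [Fintype ι] (X : ι → C) (h : ∀ i, IsZero (X i)) :
    IsZero (⨁ X) := by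
  rw [IsZero.iff_id_eq_zero]
  apply biproduct.hom_ext
  intro j
  rw [Category.id_comp, zero_comp]
  exact (h j).eq_zero_of_tgt _

theorem gaussian_isIso {X B : C} (u : X ⊞ B ⟶ X ⊞ B) (a : X ⟶ X) (ha : IsIso a)
    (hua : biprod.inl ≫ u ≫ biprod.fst = a)
    (hs : IsIso ((biprod.inr ≫ u ≫ biprod.snd)
      - (biprod.inr ≫ u ≫ biprod.fst) ≫ inv a ≫ (biprod.inl ≫ u ≫ biprod.snd))) :
    IsIso u := by
  set b := biprod.inl ≫ u ≫ biprod.snd with hb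
  set c := biprod.inr ≫ u ≫ biprod.fst with hc
  set d := biprod.inr ≫ u ≫ biprod.snd with hd
  set s := d - c ≫ inv a ≫ b with hsdef
  have key : u = (𝟙 (X ⊞ B) + biprod.snd ≫ c ≫ inv a ≫ biprod.inl)
      ≫ biprod.map a s ≫ (𝟙 (X ⊞ B) + biprod.fst ≫ inv a ≫ b ≫ biprod.inr) := by
    apply biprod.hom_ext' <;> apply biprod.hom_ext <;>
      simp [hsdef, hb, hc, hd, hua, Preadditive.comp_add, Preadditive.add_comp,
        Preadditive.comp_sub, Preadditive.sub_comp]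
  have hsi : IsIso s := hs
  have hmap : IsIso (biprod.map a s) := by
    have : biprod.map a s = (biprod.mapIso (asIso a) (asIso s)).hom := rfl
    rw [this]; infer_instance
  have hM : IsIso (𝟙 (X ⊞ B) + biprod.snd ≫ c ≫ inv a ≫ biprod.inl) := by
    refine ⟨⟨𝟙 (X ⊞ B) - biprod.snd ≫ c ≫ inv a ≫ biprod.inl, ?_, ?_⟩⟩ <;>
      simp [Preadditive.comp_add, Preadditive.add_comp, Preadditive.comp_sub,
        Preadditive.sub_comp]
  have hN : IsIso (𝟙 (X ⊞ B) + biprod.fst ≫ inv a ≫ b ≫ biprod.inr) := by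
    refine ⟨⟨𝟙 (X ⊞ B) - biprod.fst ≫ inv a ≫ b ≫ biprod.inr, ?_, ?_⟩⟩ <;>
      simp [Preadditive.comp_add, Preadditive.add_comp, Preadditive.comp_sub,
        Preadditive.sub_comp]
  rw [key]
  infer_instance

theorem isFDense_summand {F : C ⥤ D} {A B : C} (h : IsFDense F A) (hs : IsSummand A B) :
    IsFDense F B := fun B' hs' => h B' (isSummand_trans hs hs')

theorem isFDense_of_iso {F : C ⥤ D} {A A' : C} (e : A ≅ A') (h : IsFDense F A) :
    IsFDense F A' := fun B' hs' => h B' (isSummand_of_iso e hs')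

theorem isIso_one_sub_of_map_zero (F : C ⥤ D) [F.Additive] :
    ∀ (n : ℕ) (ι : Type) [Fintype ι] [DecidableEq ι], Fintype.card ι ≤ n →
    ∀ (X : ι → C), (∀ i, IsIndecomposable (X i) ∧ IsLocalRing (End (X i))) →
    ∀ (A : C), (A ≅ ⨁ X) → IsFDense F A →
    ∀ ν : A ⟶ A, F.map ν = 0 → IsIso (𝟙 A - ν) := by
  intro n
  induction n with
  | zero =>
    intro ι _ _ hcard X hX A e hdense ν hν
    haveI : IsEmpty ι := Fintype.card_eq_zero_iff.mp (Nat.le_zero.mp hcard)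
    have hz : IsZero A := (isZero_biproduct X (fun i => isEmptyElim i)).of_iso e
    exact ⟨⟨0, hz.eq_of_src _ _, hz.eq_of_src _ _⟩⟩
  | succ n ih =>
    intro ι _ _ hcard X hX A e hdense ν hν
    rcases isEmpty_or_nonempty ι with h | ⟨⟨i₀⟩⟩
    · have hz : IsZero A := (isZero_biproduct X (fun i => isEmptyElim i)).of_iso e
      exact ⟨⟨0, hz.eq_of_src _ _, hz.eq_of_src _ _⟩⟩
    · -- split off the summand `X i₀`
      set B := ⨁ (fun j : {j : ι // j ≠ i₀} => X j.1) with hBdef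
      let e' : A ≅ X i₀ ⊞ B := e ≪≫ splitIso X i₀
      set μ : X i₀ ⊞ B ⟶ X i₀ ⊞ B := e'.inv ≫ ν ≫ e'.hom with hμdef
      have hμ : F.map μ = 0 := by
        rw [hμdef, F.map_comp, F.map_comp, hν, zero_comp, comp_zero]
      have hdS : IsFDense F (X i₀ ⊞ B) := isFDense_of_iso e' hdense
      -- the (1,1)-entry of `𝟙 - μ` is invertible
      have hXne : ¬ IsZero (F.obj (X i₀)) :=
        hdS (X i₀) (isSummand_left _ _) (hX i₀).1.1
      have hFr : F.map (biprod.inl ≫ μ ≫ biprod.fst) = 0 := by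
        rw [F.map_comp, F.map_comp, hμ, zero_comp, comp_zero]
      have hru : IsIso (𝟙 (X i₀) - biprod.inl ≫ μ ≫ biprod.fst) := by
        haveI := (hX i₀).2
        rcases IsLocalRing.isUnit_or_isUnit_of_add_one (R := End (X i₀))
          (a := (biprod.inl ≫ μ ≫ biprod.fst : X i₀ ⟶ X i₀))
          (b := 𝟙 (X i₀) - biprod.inl ≫ μ ≫ biprod.fst) (by abel) with hu | hu
        · exfalso
          haveI : IsIso (biprod.inl ≫ μ ≫ biprod.fst) :=
            (isUnit_iff_isIso _).mp hu
          apply hXne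
          haveI h0 : IsIso ((0 : F.obj (X i₀) ⟶ F.obj (X i₀))) := by
            rw [← hFr]; infer_instance
          rw [IsZero.iff_id_eq_zero,
            ← IsIso.hom_inv_id (0 : F.obj (X i₀) ⟶ F.obj (X i₀)), zero_comp]
        · exact (isUnit_iff_isIso _).mp hu
      -- the top-left entry of `u = 𝟙 - μ`
      have hua : biprod.inl ≫ (𝟙 (X i₀ ⊞ B) - μ) ≫ biprod.fst
          = 𝟙 (X i₀) - biprod.inl ≫ μ ≫ biprod.fst := by
        simp [Preadditive.comp_sub, Preadditive.sub_comp]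
      -- Schur complement is invertible, by induction
      have hdB : IsFDense F B := isFDense_summand hdS (isSummand_right _ _)
      have hcard' : Fintype.card {j : ι // j ≠ i₀} ≤ n := by
        have : Fintype.card {j : ι // j ≠ i₀} < Fintype.card ι :=
          Fintype.card_subtype_lt (x := i₀) (by simp)
        omega
      have hFc : F.map (biprod.inr ≫ (𝟙 (X i₀ ⊞ B) - μ) ≫ biprod.fst) = 0 := by
        have hc' : biprod.inr ≫ (𝟙 (X i₀ ⊞ B) - μ) ≫ biprod.fst
            = -(biprod.inr ≫ μ ≫ biprod.fst) := by
          simp [Preadditive.comp_sub, Preadditive.sub_comp]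
        rw [hc', F.map_neg, F.map_comp, F.map_comp, hμ, zero_comp, comp_zero, neg_zero]
      have hFd : F.map (𝟙 B - biprod.inr ≫ (𝟙 (X i₀ ⊞ B) - μ) ≫ biprod.snd) = 0 := by
        have hd' : 𝟙 B - biprod.inr ≫ (𝟙 (X i₀ ⊞ B) - μ) ≫ biprod.snd
            = biprod.inr ≫ μ ≫ biprod.snd := by
          simp [Preadditive.comp_sub, Preadditive.sub_comp]
        rw [hd', F.map_comp, F.map_comp, hμ, zero_comp, comp_zero]
      set sch := (biprod.inr ≫ (𝟙 (X i₀ ⊞ B) - μ) ≫ biprod.snd)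
          - (biprod.inr ≫ (𝟙 (X i₀ ⊞ B) - μ) ≫ biprod.fst)
            ≫ inv (𝟙 (X i₀) - biprod.inl ≫ μ ≫ biprod.fst)
            ≫ (biprod.inl ≫ (𝟙 (X i₀ ⊞ B) - μ) ≫ biprod.snd) with hschdef
      have hνB : F.map (𝟙 B - sch) = 0 := by
        have hsplit : 𝟙 B - sch = (𝟙 B - biprod.inr ≫ (𝟙 (X i₀ ⊞ B) - μ) ≫ biprod.snd)
            + (biprod.inr ≫ (𝟙 (X i₀ ⊞ B) - μ) ≫ biprod.fst)
              ≫ (inv (𝟙 (X i₀) - biprod.inl ≫ μ ≫ biprod.fst)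
                ≫ (biprod.inl ≫ (𝟙 (X i₀ ⊞ B) - μ) ≫ biprod.snd)) := by
          rw [hschdef]; abel
        have hterm : F.map ((biprod.inr ≫ (𝟙 (X i₀ ⊞ B) - μ) ≫ biprod.fst)
            ≫ (inv (𝟙 (X i₀) - biprod.inl ≫ μ ≫ biprod.fst)
              ≫ (biprod.inl ≫ (𝟙 (X i₀ ⊞ B) - μ) ≫ biprod.snd))) = 0 := by
          rw [F.map_comp (f := biprod.inr ≫ (𝟙 (X i₀ ⊞ B) - μ) ≫ biprod.fst), hFc, zero_comp]
        rw [hsplit, F.map_add, hFd, hterm, zero_add]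
      have hschIso : IsIso sch := by
        have := ih {j : ι // j ≠ i₀} hcard' (fun j => X j.1) (fun j => hX j.1)
          B (Iso.refl B) hdB (𝟙 B - sch) hνB
        rw [sub_sub_cancel] at this
        exact this
      -- conclude via Gaussian elimination
      have hu : IsIso (𝟙 (X i₀ ⊞ B) - μ) := by
        apply gaussian_isIso (𝟙 (X i₀ ⊞ B) - μ) (𝟙 (X i₀) - biprod.inl ≫ μ ≫ biprod.fst) hru hua
        rw [← hschdef] at *
        exact hschIso
      -- transport back along `e'`
      have : 𝟙 A - ν = e'.hom ≫ (𝟙 (X i₀ ⊞ B) - μ) ≫ e'.inv := by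
        rw [hμdef]
        simp [Preadditive.comp_sub, Preadditive.sub_comp]
      rw [this]
      infer_instance

theorem isZero_F_obj_of_decomp (F : C ⥤ D) [F.Additive] {A₀ : C}
    (hdec : ∃ (n : ℕ) (Y : Fin n → C),
      (∀ i, IsIndecomposable (Y i) ∧ IsLocalRing (End (Y i))) ∧ Nonempty (A₀ ≅ ⨁ Y))
    (h0 : ∀ X : C, IsIndecomposable X → IsSummand A₀ X → IsZero (F.obj X)) :
    IsZero (F.obj A₀) := by
  obtain ⟨n, Y, hY, ⟨e⟩⟩ := hdec
  rw [IsZero.iff_id_eq_zero]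
  have htot : 𝟙 A₀ = e.hom ≫ (∑ j, biproduct.π Y j ≫ biproduct.ι Y j) ≫ e.inv := by
    rw [biproduct.total]; simp
  rw [← F.map_id, htot, Preadditive.comp_sum_assoc]
  rw [Preadditive.sum_comp, F.map_sum]
  apply Finset.sum_eq_zero
  intro j _
  have hz : IsZero (F.obj (Y j)) := h0 (Y j) (hY j).1
    (isSummand_of_iso e ⟨_, ⟨splitIso Y j⟩⟩)
  have hre : (e.hom ≫ biproduct.π Y j ≫ biproduct.ι Y j) ≫ e.inv
      = (e.hom ≫ biproduct.π Y j) ≫ (biproduct.ι Y j ≫ e.inv) := by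
    simp
  rw [hre, F.map_comp, hz.eq_zero_of_tgt (F.map (e.hom ≫ biproduct.π Y j)), zero_comp]

end Auxiliary

/-- Given maximal `F`-dense decompositions `A ≅ A_F ⊞ A_0` and `B ≅ B_F ⊞ B_0`, and
morphisms `f : A ⟶ B`, `g : B ⟶ A` such that `F(f)` and `F(g)` are mutually inverse
isomorphisms, the induced morphisms `f' = π_B ∘ f ∘ i_A : A_F ⟶ B_F` and
`g' = π_A ∘ g ∘ i_B : B_F ⟶ A_F` are isomorphisms. -/
theorem statement2
    (hC : IsKrullSchmidtCat C) (hD : IsKrullSchmidtCat D)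
    (F : C ⥤ D) [F.Additive] (hF : IsKrullSchmidtFunctor F)
    {A B A_F A_0 B_F B_0 : C}
    (eA : A ≅ A_F ⊞ A_0) (eB : B ≅ B_F ⊞ B_0)
    (hAF : IsFDense F A_F)
    (hA0 : ∀ X : C, IsIndecomposable X → IsSummand A_0 X → IsZero (F.obj X))
    (hBF : IsFDense F B_F)
    (hB0 : ∀ X : C, IsIndecomposable X → IsSummand B_0 X → IsZero (F.obj X))
    (f : A ⟶ B) (g : B ⟶ A)
    (hfg : F.map f ≫ F.map g = 𝟙 (F.obj A))
    (hgf : F.map g ≫ F.map f = 𝟙 (F.obj B)) :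
    -- `i_A = biprod.inl ≫ eA.inv`, `π_B = eB.hom ≫ biprod.fst`, etc.
    IsIso ((biprod.inl ≫ eA.inv) ≫ f ≫ (eB.hom ≫ biprod.fst)) ∧
    IsIso ((biprod.inl ≫ eB.inv) ≫ g ≫ (eA.hom ≫ biprod.fst)) := by
  have hFA0 : IsZero (F.obj A_0) := isZero_F_obj_of_decomp F (hC A_0) hA0
  have hFB0 : IsZero (F.obj B_0) := isZero_F_obj_of_decomp F (hC B_0) hB0
  set f' := (biprod.inl ≫ eA.inv) ≫ f ≫ (eB.hom ≫ biprod.fst) with hf'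
  set g' := (biprod.inl ≫ eB.inv) ≫ g ≫ (eA.hom ≫ biprod.fst) with hg'
  -- C-level reassociation helpers
  have hfiB : ∀ {Z : C} (t : B_F ⊞ B_0 ⟶ Z),
      (biprod.fst : B_F ⊞ B_0 ⟶ B_F) ≫ biprod.inl ≫ t
        = t - biprod.snd ≫ biprod.inr ≫ t := by
    intro Z t
    have h2 : (biprod.fst ≫ biprod.inl : B_F ⊞ B_0 ⟶ _)
        = 𝟙 (B_F ⊞ B_0) - biprod.snd ≫ biprod.inr := by
      rw [← biprod.total]; abel
    rw [← Category.assoc, h2]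
    simp [Preadditive.sub_comp]
  have hfiA : ∀ {Z : C} (t : A_F ⊞ A_0 ⟶ Z),
      (biprod.fst : A_F ⊞ A_0 ⟶ A_F) ≫ biprod.inl ≫ t
        = t - biprod.snd ≫ biprod.inr ≫ t := by
    intro Z t
    have h2 : (biprod.fst ≫ biprod.inl : A_F ⊞ A_0 ⟶ _)
        = 𝟙 (A_F ⊞ A_0) - biprod.snd ≫ biprod.inr := by
      rw [← biprod.total]; abel
    rw [← Category.assoc, h2]
    simp [Preadditive.sub_comp]
  -- D-level helpers
  have hsndB : F.map (biprod.snd : B_F ⊞ B_0 ⟶ B_0) = 0 := hFB0.eq_zero_of_tgt _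
  have hsndA : F.map (biprod.snd : A_F ⊞ A_0 ⟶ A_0) = 0 := hFA0.eq_zero_of_tgt _
  have hBe : ∀ {Z : D} (t : F.obj B ⟶ Z), F.map eB.hom ≫ F.map eB.inv ≫ t = t := by
    intro Z t; rw [← Category.assoc, ← F.map_comp, eB.hom_inv_id, F.map_id, Category.id_comp]
  have hAe : ∀ {Z : D} (t : F.obj A ⟶ Z), F.map eA.hom ≫ F.map eA.inv ≫ t = t := by
    intro Z t; rw [← Category.assoc, ← F.map_comp, eA.hom_inv_id, F.map_id, Category.id_comp]
  have hAe' : ∀ {Z : D} (t : F.obj (A_F ⊞ A_0) ⟶ Z),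
      F.map eA.inv ≫ F.map eA.hom ≫ t = t := by
    intro Z t; rw [← Category.assoc, ← F.map_comp, eA.inv_hom_id, F.map_id, Category.id_comp]
  have hBe' : ∀ {Z : D} (t : F.obj (B_F ⊞ B_0) ⟶ Z),
      F.map eB.inv ≫ F.map eB.hom ≫ t = t := by
    intro Z t; rw [← Category.assoc, ← F.map_comp, eB.inv_hom_id, F.map_id, Category.id_comp]
  have hfg' : ∀ {Z : D} (t : F.obj A ⟶ Z), F.map f ≫ F.map g ≫ t = t := by
    intro Z t; rw [← Category.assoc, hfg, Category.id_comp]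
  have hgf' : ∀ {Z : D} (t : F.obj B ⟶ Z), F.map g ≫ F.map f ≫ t = t := by
    intro Z t; rw [← Category.assoc, hgf, Category.id_comp]
  have hfinA : F.map (biprod.inl : A_F ⟶ A_F ⊞ A_0) ≫ F.map (biprod.fst) = 𝟙 (F.obj A_F) := by
    rw [← F.map_comp, biprod.inl_fst, F.map_id]
  have hfinB : F.map (biprod.inl : B_F ⟶ B_F ⊞ B_0) ≫ F.map (biprod.fst) = 𝟙 (F.obj B_F) := by
    rw [← F.map_comp, biprod.inl_fst, F.map_id]
  -- the two key identities
  have key1 : F.map (f' ≫ g') = 𝟙 (F.obj A_F) := by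
    rw [hf', hg']
    simp only [Category.assoc]
    rw [hfiB]
    simp only [Preadditive.comp_sub]
    rw [F.map_sub]
    simp only [F.map_comp, Category.assoc]
    rw [hsndB]
    simp only [zero_comp, comp_zero, sub_zero]
    rw [hBe, hfg', hAe', hfinA]
  have key2 : F.map (g' ≫ f') = 𝟙 (F.obj B_F) := by
    rw [hf', hg']
    simp only [Category.assoc]
    rw [hfiA]
    simp only [Preadditive.comp_sub]
    rw [F.map_sub]
    simp only [F.map_comp, Category.assoc]
    rw [hsndA]
    simp only [zero_comp, comp_zero, sub_zero]
    rw [hAe, hgf', hBe', hfinB]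
  -- conclude that `f' ≫ g'` and `g' ≫ f'` are isomorphisms
  obtain ⟨nA, XA, hXA, ⟨eAF⟩⟩ := hC A_F
  have hν1 : F.map (𝟙 A_F - f' ≫ g') = 0 := by
    rw [F.map_sub, F.map_id, key1, sub_self]
  have hu1 : IsIso (𝟙 A_F - (𝟙 A_F - f' ≫ g')) :=
    isIso_one_sub_of_map_zero F nA (Fin nA) (by simp) XA hXA A_F eAF hAF _ hν1
  rw [sub_sub_cancel] at hu1
  obtain ⟨nB, XB, hXB, ⟨eBF⟩⟩ := hC B_F
  have hν2 : F.map (𝟙 B_F - g' ≫ f') = 0 := by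
    rw [F.map_sub, F.map_id, key2, sub_self]
  have hu2 : IsIso (𝟙 B_F - (𝟙 B_F - g' ≫ f')) :=
    isIso_one_sub_of_map_zero F nB (Fin nB) (by simp) XB hXB B_F eBF hBF _ hν2
  rw [sub_sub_cancel] at hu2
  haveI := hu1
  haveI := hu2
  -- standard argument: one-sided inverses on both sides give isomorphisms
  have hr : f' ≫ (g' ≫ inv (f' ≫ g')) = 𝟙 A_F := by
    rw [← Category.assoc, IsIso.hom_inv_id]
  have hl : (inv (g' ≫ f') ≫ g') ≫ f' = 𝟙 B_F := by
    rw [Category.assoc, IsIso.inv_hom_id]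
  have hrl : g' ≫ inv (f' ≫ g') = inv (g' ≫ f') ≫ g' := by
    calc g' ≫ inv (f' ≫ g')
        = ((inv (g' ≫ f') ≫ g') ≫ f') ≫ g' ≫ inv (f' ≫ g') := by
          rw [hl, Category.id_comp]
      _ = inv (g' ≫ f') ≫ g' ≫ f' ≫ g' ≫ inv (f' ≫ g') := by
          simp only [Category.assoc]
      _ = inv (g' ≫ f') ≫ g' := by
          rw [hr, Category.comp_id]
  have hIf : IsIso f' := ⟨⟨g' ≫ inv (f' ≫ g'), hr, by rw [hrl]; exact hl⟩⟩
  haveI := hIf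
  have hIg : IsIso g' := by
    have hgdec : g' = inv f' ≫ (f' ≫ g') := by
      rw [← Category.assoc, IsIso.inv_hom_id, Category.id_comp]
    rw [hgdec]
    infer_instance
  exact ⟨hIf, hIg⟩
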